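/- Let h > 0 and n ≥ 1. Define the upper-triangular n×n matrices (1-based indices): U[i,j] = (j-1)!/(j-i)! · h^{j+n-i} for j ≥ i (0 otherwise) and V[i,j] = (-1)^{i+j} / ((i-1)! (j-i)! h^{n+i-j}) for j ≥ i (0 otherwise). Then U · V = I, i.e., V = U^{-1}. -/

import Mathlib

theorem U_inverse (n : ℕ) (hn : 1 ≤ n) (h : ℝ) (hh : 0 < h) :
    (Matrix.of fun i j : Fin n =>
        if i.1 ≤ j.1 then
          ((j.1.factorial : ℝ) / ((j.1 - i.1).factorial : ℝ)) * h ^ (j.1 + 1 + n - (i.1 + 1))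
        else 0) *
      (Matrix.of fun i j : Fin n =>
        if i.1 ≤ j.1 then
          (-1 : ℝ) ^ (i.1 + j.1) /
            ((i.1.factorial : ℝ) * ((j.1 - i.1).factorial : ℝ)) *
            h ^ ((j.1 : ℤ) - (i.1 : ℤ) - (n : ℤ))
        else 0) = 1 := by
  have hne : h ≠ 0 := ne_of_gt hh
  ext i j
  rw [Matrix.mul_apply, Matrix.one_apply]
  simp only [Matrix.of_apply]
  set g : ℕ → ℝ := fun k =>
    (if i.1 ≤ k then ((k.factorial : ℝ) / ((k - i.1).factorial : ℝ)) * h ^ (k + 1 + n - (i.1 + 1)) else 0) *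
    (if k ≤ j.1 then (-1 : ℝ) ^ (k + j.1) / ((k.factorial : ℝ) * ((j.1 - k).factorial : ℝ)) * h ^ ((j.1 : ℤ) - (k : ℤ) - (n : ℤ)) else 0) with hg
  have hrw : ∑ k : Fin n, g k.1 = ∑ k ∈ Finset.range n, g k := Fin.sum_univ_eq_sum_range g n
  rw [show (∑ k : Fin n,
      (if i.1 ≤ k.1 then ((k.1.factorial : ℝ) / ((k.1 - i.1).factorial : ℝ)) * h ^ (k.1 + 1 + n - (i.1 + 1)) else 0) *
      (if k.1 ≤ j.1 then (-1 : ℝ) ^ (k.1 + j.1) / ((k.1.factorial : ℝ) * ((j.1 - k.1).factorial : ℝ)) * h ^ ((j.1 : ℤ) - (k.1 : ℤ) - (n : ℤ)) else 0)) = ∑ k : Fin n, g k.1 from rfl, hrw]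
  by_cases hij : i.1 ≤ j.1
  · have h1 : ∑ k ∈ Finset.range n, g k = ∑ k ∈ Finset.Icc i.1 j.1, g k := by
      refine (Finset.sum_subset ?_ ?_).symm
      · intro k hk
        simp only [Finset.mem_Icc] at hk
        simp only [Finset.mem_range]
        omega
      · intro k _ hk'
        simp only [Finset.mem_Icc, not_and_or, not_le] at hk'
        simp only [hg]
        rcases hk' with hk' | hk'
        · rw [if_neg (show ¬ i.1 ≤ k by omega), zero_mul]
        · rw [if_neg (show ¬ k ≤ j.1 by omega), mul_zero]
    rw [h1, ← Finset.Ico_add_one_right_eq_Icc, Finset.sum_Ico_eq_sum_range, show j.1 + 1 - i.1 = (j.1 - i.1) + 1 by omega]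
    set d := j.1 - i.1 with hdd
    have h2 : ∀ m ∈ Finset.range (d + 1), g (i.1 + m) =
        ((-1 : ℝ) ^ (i.1 + j.1) * h ^ d / (d.factorial : ℝ)) * ((-1 : ℝ) ^ m * (d.choose m : ℝ)) := by
      intro m hm
      rw [Finset.mem_range] at hm
      have hm' : m ≤ d := by omega
      simp only [hg]
      rw [if_pos (show i.1 ≤ i.1 + m by omega), if_pos (show i.1 + m ≤ j.1 by omega),
        show i.1 + m + 1 + n - (i.1 + 1) = m + n by omega,
        show i.1 + m - i.1 = m by omega,
        show j.1 - (i.1 + m) = d - m by omega]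
      have hz : h ^ (m + n) * h ^ ((j.1 : ℤ) - ((i.1 + m : ℕ) : ℤ) - (n : ℤ)) = h ^ d := by
        rw [← zpow_natCast h (m + n), ← zpow_add₀ hne, ← zpow_natCast h d]
        congr 1
        push_cast
        omega
      have hfac : ((m.factorial : ℝ)) * (((d - m).factorial : ℝ)) * ((d.choose m : ℝ)) = (d.factorial : ℝ) := by
        exact_mod_cast congrArg (Nat.cast : ℕ → ℝ)
          (by rw [← Nat.choose_mul_factorial_mul_factorial hm']; ring)
      have him : (((i.1 + m).factorial : ℝ)) ≠ 0 := Nat.cast_ne_zero.2 (Nat.factorial_ne_zero _)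
      have hmf : ((m.factorial : ℝ)) ≠ 0 := Nat.cast_ne_zero.2 (Nat.factorial_ne_zero _)
      have hdm : (((d - m).factorial : ℝ)) ≠ 0 := Nat.cast_ne_zero.2 (Nat.factorial_ne_zero _)
      have hdf : ((d.factorial : ℝ)) ≠ 0 := Nat.cast_ne_zero.2 (Nat.factorial_ne_zero _)
      have hsgn : (-1 : ℝ) ^ (i.1 + m + j.1) = (-1 : ℝ) ^ (i.1 + j.1) * (-1 : ℝ) ^ m := by
        rw [← pow_add]; congr 1; omega
      calc ((i.1 + m).factorial : ℝ) / ((m.factorial : ℝ)) * h ^ (m + n) *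
            ((-1 : ℝ) ^ (i.1 + m + j.1) / (((i.1 + m).factorial : ℝ) * ((d - m).factorial : ℝ)) *
              h ^ ((j.1 : ℤ) - ((i.1 + m : ℕ) : ℤ) - (n : ℤ)))
          = (((i.1 + m).factorial : ℝ) / ((m.factorial : ℝ)) *
              ((-1 : ℝ) ^ (i.1 + m + j.1) / (((i.1 + m).factorial : ℝ) * ((d - m).factorial : ℝ)))) *
              (h ^ (m + n) * h ^ ((j.1 : ℤ) - ((i.1 + m : ℕ) : ℤ) - (n : ℤ))) := by ring
        _ = ((-1 : ℝ) ^ (i.1 + j.1) * h ^ d / (d.factorial : ℝ)) * ((-1 : ℝ) ^ m * (d.choose m : ℝ)) := by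
            rw [hz, hsgn]
            field_simp
            linear_combination (-1 : ℝ) * hfac
    rw [Finset.sum_congr rfl h2, ← Finset.mul_sum]
    have key : ∑ m ∈ Finset.range (d + 1), ((-1 : ℝ) ^ m * (d.choose m : ℝ)) =
        if d = 0 then 1 else 0 := by
      have h0 := Int.alternating_sum_range_choose (n := d)
      have h1 := congrArg (fun z : ℤ => (z : ℝ)) h0
      push_cast at h1
      simpa using h1
    rw [key]
    by_cases hij2 : i = j
    · subst hij2
      simp only [hdd, Nat.sub_self, if_pos rfl, if_pos rfl]
      rw [show i.1 + i.1 = 2 * i.1 by omega, pow_mul]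
      norm_num
    · have hd0 : d ≠ 0 := fun hd0 => hij2 (Fin.ext (by omega))
      rw [if_neg hd0, if_neg hij2, mul_zero]
  · have hz : ∀ k ∈ Finset.range n, g k = 0 := by
      intro k _
      simp only [hg]
      by_cases h1 : i.1 ≤ k
      · rw [if_neg (show ¬ k ≤ j.1 by omega), mul_zero]
      · rw [if_neg h1, zero_mul]
    rw [Finset.sum_eq_zero hz, if_neg (fun he => hij (by rw [he]))]
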